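/- (Coifman–Rochberg on spaces of homogeneous type) Let f be locally integrable on X with Mf(x) < ∞ for μ-almost every x, and let 0 ≤ δ < 1. Then (Mf)^δ ∈ A_1(X); that is, there is a constant C, depending only on δ and the doubling constant C_μ, such that M((Mf)^δ)(x) ≤ C · (Mf(x))^δ for μ-almost every x ∈ X. -/

import Mathlib

set_option linter.unusedSectionVars false
set_option linter.unusedVariables false

open MeasureTheory Metric ENNReal
open Set

/-- The centered Hardy--Littlewood maximal operator on `ℝ≥0∞`-valued functions. -/
noncomputable def centeredMaxFnE {X : Type*} [MetricSpace X] [MeasurableSpace X]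
    (μ : Measure X) (g : X → ℝ≥0∞) (x : X) : ℝ≥0∞ :=
  ⨆ (r : ℝ) (_ : 0 < r), (μ (ball x r))⁻¹ * ∫⁻ y in ball x r, g y ∂μ

/-- The centered Hardy--Littlewood maximal function of a real function. -/
noncomputable def centeredMaxFn {X : Type*} [MetricSpace X] [MeasurableSpace X]
    (μ : Measure X) (f : X → ℝ) (x : X) : ℝ≥0∞ :=
  centeredMaxFnE μ (fun y => ENNReal.ofReal |f y|) x

namespace CR

variable {X : Type*} [MetricSpace X] [MeasurableSpace X] [BorelSpace X]

/-- average of measure ν against μ on a ball -/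
noncomputable def avg (μ ν : Measure X) (s : ℝ) (x : X) : ℝ≥0∞ :=
  (μ (ball x s))⁻¹ * ν (ball x s)

noncomputable def maxFn (μ ν : Measure X) (x : X) : ℝ≥0∞ :=
  ⨆ (s : ℝ) (_ : 0 < s), avg μ ν s x

noncomputable def maxFnLoc (μ ν : Measure X) (R : ℝ) (x : X) : ℝ≥0∞ :=
  ⨆ q : {q : ℚ // 0 < (q : ℝ) ∧ (q : ℝ) ≤ R}, avg μ ν (q : ℝ) x

lemma measure_ball_eq_iSup (ν : Measure X) (x : X) {s : ℝ} (hs : 0 < s) :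
    ν (ball x s) = ⨆ q : {q : ℚ // 0 < (q : ℝ) ∧ (q : ℝ) < s}, ν (ball x (q : ℝ)) := by
  have h1 : ball x s = ⋃ q : {q : ℚ // 0 < (q : ℝ) ∧ (q : ℝ) < s}, ball x (q : ℝ) := by
    ext y
    simp only [mem_iUnion, mem_ball]
    constructor
    · intro hy
      obtain ⟨q, hq1, hq2⟩ := exists_rat_btwn hy
      exact ⟨⟨q, lt_of_le_of_lt dist_nonneg hq1, hq2⟩, hq1⟩
    · rintro ⟨q, hq⟩
      exact hq.trans q.2.2
  have hd : Directed (· ⊆ ·) fun q : {q : ℚ // 0 < (q : ℝ) ∧ (q : ℝ) < s} =>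
      ball x (q : ℝ) := by
    rintro ⟨a, ha⟩ ⟨b, hb⟩
    refine ⟨⟨max a b, ?_, ?_⟩, ?_, ?_⟩
    · push_cast; exact lt_max_of_lt_left ha.1
    · push_cast; exact max_lt ha.2 hb.2
    · apply ball_subset_ball; push_cast; exact le_max_left _ _
    · apply ball_subset_ball; push_cast; exact le_max_right _ _
  rw [h1, hd.measure_iUnion]

lemma lsc_measure_ball (ν : Measure X) {s : ℝ} (hs : 0 < s) :
    LowerSemicontinuous fun x : X => ν (ball x s) := by
  intro x c hc
  dsimp only at hc ⊢
  rw [measure_ball_eq_iSup ν x hs, gt_iff_lt, lt_iSup_iff] at hc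
  obtain ⟨⟨q, hq0, hqs⟩, hq⟩ := hc
  have hmem : ball x (s - q) ∈ nhds x := ball_mem_nhds x (by linarith)
  filter_upwards [hmem] with y hy
  refine hq.trans_le (measure_mono fun z hz => ?_)
  rw [mem_ball] at hz hy ⊢
  have h3 : dist z y ≤ dist z x + dist y x := by
    rw [dist_comm y x]; exact dist_triangle z x y
  have h4 : dist z x < (q : ℝ) := by exact_mod_cast hz
  linarith

lemma measurable_avg (μ ν : Measure X) {s : ℝ} (hs : 0 < s) :
    Measurable (avg μ ν s) :=
  ((lsc_measure_ball μ hs).measurable.inv).mul (lsc_measure_ball ν hs).measurable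

lemma measurable_maxFnLoc (μ ν : Measure X) {R : ℝ} (hR : 0 < R) :
    Measurable (maxFnLoc μ ν R) :=
  Measurable.iSup fun q => measurable_avg μ ν q.2.1

lemma avg_le_iSup_rat (μ ν : Measure X) (x : X) {s : ℝ} (hs : 0 < s) :
    avg μ ν s x ≤ ⨆ q : {q : ℚ // 0 < (q : ℝ) ∧ (q : ℝ) < s}, avg μ ν (q : ℝ) x := by
  rw [avg, measure_ball_eq_iSup ν x hs, ENNReal.mul_iSup]
  refine iSup_mono fun q => mul_le_mul' ?_ le_rfl
  exact ENNReal.inv_le_inv.2 (measure_mono (ball_subset_ball q.2.2.le))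

lemma maxFnLoc_le_maxFn (μ ν : Measure X) (R : ℝ) (x : X) :
    maxFnLoc μ ν R x ≤ maxFn μ ν x := by
  refine iSup_le fun q => ?_
  exact le_iSup₂ (f := fun s (_ : 0 < s) => avg μ ν s x) (q : ℝ) q.2.1


section Doubling

variable {μ ν : Measure X} {Cμ : ℝ}

lemma oC_ne_zero (hCμ : 1 ≤ Cμ) : (ENNReal.ofReal Cμ) ≠ 0 := by
  simp only [ne_eq, ENNReal.ofReal_eq_zero, not_le]; linarith

lemma pow_oC_ne_zero (hCμ : 1 ≤ Cμ) (n : ℕ) : (ENNReal.ofReal Cμ) ^ n ≠ 0 :=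
  pow_ne_zero n (oC_ne_zero hCμ)

lemma pow_oC_ne_top (n : ℕ) : (ENNReal.ofReal Cμ) ^ n ≠ ∞ :=
  pow_ne_top ENNReal.ofReal_ne_top

/-- iterated doubling: `μ (ball x (2^n * s)) ≤ Cμ^n μ (ball x s)` -/
lemma doubling_pow (hdbl : ∀ (x : X) (r : ℝ), 0 < r →
      μ (ball x (2 * r)) ≤ ENNReal.ofReal Cμ * μ (ball x r))
    (x : X) {s : ℝ} (hs : 0 < s) (n : ℕ) :
    μ (ball x (2 ^ n * s)) ≤ (ENNReal.ofReal Cμ) ^ n * μ (ball x s) := by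
  induction n with
  | zero => simp
  | succ n ih =>
    have h2 : (2 : ℝ) ^ (n + 1) * s = 2 * (2 ^ n * s) := by ring
    have hp : (0 : ℝ) < 2 ^ n * s := by positivity
    calc μ (ball x (2 ^ (n + 1) * s)) = μ (ball x (2 * (2 ^ n * s))) := by rw [h2]
      _ ≤ ENNReal.ofReal Cμ * μ (ball x (2 ^ n * s)) := hdbl x _ hp
      _ ≤ ENNReal.ofReal Cμ * ((ENNReal.ofReal Cμ) ^ n * μ (ball x s)) := by
          exact mul_le_mul' le_rfl ih
      _ = (ENNReal.ofReal Cμ) ^ (n + 1) * μ (ball x s) := by ring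

/-- For `y ∈ ball x r` and `r ≤ s`, the `s`-average at `y` is controlled by `Mν x`. -/
lemma avg_far (hCμ : 1 ≤ Cμ)
    (hdbl : ∀ (x : X) (r : ℝ), 0 < r →
      μ (ball x (2 * r)) ≤ ENNReal.ofReal Cμ * μ (ball x r))
    {x y : X} {r s : ℝ} (hr : 0 < r) (hy : y ∈ ball x r) (hrs : r ≤ s) :
    avg μ ν s y ≤ (ENNReal.ofReal Cμ) ^ 2 * maxFn μ ν x := by
  have hs : 0 < s := lt_of_lt_of_le hr hrs
  rw [mem_ball] at hy
  have h1 : ball y s ⊆ ball x (2 * s) := fun z hz => by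
    rw [mem_ball] at hz ⊢
    have := dist_triangle z y x
    linarith
  have h2 : ball x (2 * s) ⊆ ball y (4 * s) := fun z hz => by
    rw [mem_ball] at hz ⊢
    have h3 : dist z y ≤ dist z x + dist x y := dist_triangle z x y
    rw [dist_comm x y] at h3
    linarith
  have h4 : μ (ball x (2 * s)) ≤ (ENNReal.ofReal Cμ) ^ 2 * μ (ball y s) := by
    refine (measure_mono h2).trans ?_
    have := doubling_pow hdbl y hs 2
    norm_num at this
    exact this
  have hinv : (μ (ball y s))⁻¹ ≤ (ENNReal.ofReal Cμ) ^ 2 * (μ (ball x (2 * s)))⁻¹ := by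
    calc (μ (ball y s))⁻¹
        = (ENNReal.ofReal Cμ) ^ 2 * (((ENNReal.ofReal Cμ) ^ 2) * μ (ball y s))⁻¹ := by
          rw [ENNReal.mul_inv (Or.inl (pow_oC_ne_zero hCμ 2)) (Or.inl (pow_oC_ne_top 2)),
            ← mul_assoc, ENNReal.mul_inv_cancel (pow_oC_ne_zero hCμ 2) (pow_oC_ne_top 2),
            one_mul]
      _ ≤ (ENNReal.ofReal Cμ) ^ 2 * (μ (ball x (2 * s)))⁻¹ :=
          mul_le_mul' le_rfl (ENNReal.inv_le_inv.2 h4)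
  have havg : avg μ ν s y ≤ (ENNReal.ofReal Cμ) ^ 2 * avg μ ν (2 * s) x := by
    rw [avg, avg]
    calc (μ (ball y s))⁻¹ * ν (ball y s)
        ≤ ((ENNReal.ofReal Cμ) ^ 2 * (μ (ball x (2 * s)))⁻¹) * ν (ball x (2 * s)) :=
          mul_le_mul' hinv (measure_mono h1)
      _ = (ENNReal.ofReal Cμ) ^ 2 * ((μ (ball x (2 * s)))⁻¹ * ν (ball x (2 * s))) := by ring
  refine havg.trans (mul_le_mul' le_rfl ?_)
  exact le_iSup₂ (f := fun t (_ : 0 < t) => avg μ ν t x) (2 * s) (by linarith)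

/-- On `ball x r`, `Mν ≤ max (local maximal fn) (Cμ² Mν x)`. -/
lemma maxFn_le_on_ball (hCμ : 1 ≤ Cμ)
    (hdbl : ∀ (x : X) (r : ℝ), 0 < r →
      μ (ball x (2 * r)) ≤ ENNReal.ofReal Cμ * μ (ball x r))
    {x y : X} {r : ℝ} (hr : 0 < r) (hy : y ∈ ball x r) :
    maxFn μ ν y ≤ maxFnLoc μ ν r y ⊔ ((ENNReal.ofReal Cμ) ^ 2 * maxFn μ ν x) := by
  refine iSup₂_le fun s hs => ?_
  rcases le_or_gt s r with h | h
  · refine le_sup_of_le_left ?_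
    refine (avg_le_iSup_rat μ ν y hs).trans (iSup_le fun q => ?_)
    exact le_iSup_of_le ⟨q.1, q.2.1, q.2.2.le.trans h⟩ le_rfl
  · exact le_sup_of_le_right (avg_far hCμ hdbl hr hy h.le)

/-- `ν B ≤ μ B ⬝ Mν x` for balls centered at `x`. -/
lemma measure_le_mul_maxFn
    (hpos : ∀ (x : X) (r : ℝ), 0 < r → 0 < μ (ball x r))
    (hfin : ∀ (x : X) (r : ℝ), 0 < r → μ (ball x r) < ⊤)
    (x : X) {s : ℝ} (hs : 0 < s) :
    ν (ball x s) ≤ μ (ball x s) * maxFn μ ν x := by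
  have h1 : avg μ ν s x ≤ maxFn μ ν x :=
    le_iSup₂ (f := fun t (_ : 0 < t) => avg μ ν t x) s hs
  calc ν (ball x s) = μ (ball x s) * avg μ ν s x := by
        rw [avg, ← mul_assoc, ENNReal.mul_inv_cancel (hpos x s hs).ne' (hfin x s hs).ne,
          one_mul]
    _ ≤ μ (ball x s) * maxFn μ ν x := mul_le_mul' le_rfl h1

end Doubling

section Weak

variable {μ ν : Measure X} {Cμ : ℝ}

lemma weak_type (hCμ : 1 ≤ Cμ)
    (hdbl : ∀ (x : X) (r : ℝ), 0 < r →
      μ (ball x (2 * r)) ≤ ENNReal.ofReal Cμ * μ (ball x r))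
    (hpos : ∀ (x : X) (r : ℝ), 0 < r → 0 < μ (ball x r))
    (hfin : ∀ (x : X) (r : ℝ), 0 < r → μ (ball x r) < ⊤)
    (x : X) {r : ℝ} (hr : 0 < r) {l : ℝ≥0∞} (hl0 : l ≠ 0) (hltop : l ≠ ∞) :
    μ {y | y ∈ ball x r ∧ l < maxFnLoc μ ν r y} ≤
      (ENNReal.ofReal Cμ) ^ 3 * l⁻¹ * ν (ball x (2 * r)) := by
  set E := {y | y ∈ ball x r ∧ l < maxFnLoc μ ν r y} with hE
  have hsel : ∀ y : E, ∃ qq : ℚ, 0 < (qq : ℝ) ∧ (qq : ℝ) ≤ r ∧ l < avg μ ν (qq : ℝ) (y : X) := by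
    rintro ⟨y, hy1, hy2⟩
    rw [maxFnLoc, lt_iSup_iff] at hy2
    obtain ⟨⟨qq, hq⟩, h⟩ := hy2
    exact ⟨qq, hq.1, hq.2, h⟩
  choose q hq0 hqr hql using hsel
  have key : ∀ y : E, μ (ball (y : X) (q y)) ≤ l⁻¹ * ν (ball (y : X) (q y)) := by
    intro y
    have hBpos := hpos (y : X) (q y) (hq0 y)
    have hBfin := hfin (y : X) (q y) (hq0 y)
    have h1 : l * μ (ball (y : X) (q y)) ≤ ν (ball (y : X) (q y)) := by
      have h2 := (hql y).le
      rw [avg] at h2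
      calc l * μ (ball (y : X) (q y))
          ≤ ((μ (ball (y : X) (q y)))⁻¹ * ν (ball (y : X) (q y))) * μ (ball (y : X) (q y)) :=
            mul_le_mul' h2 le_rfl
        _ = ν (ball (y : X) (q y)) * ((μ (ball (y : X) (q y)))⁻¹ * μ (ball (y : X) (q y))) := by
            ring
        _ = ν (ball (y : X) (q y)) := by
            rw [ENNReal.inv_mul_cancel hBpos.ne' hBfin.ne, mul_one]
    calc μ (ball (y : X) (q y)) = l⁻¹ * (l * μ (ball (y : X) (q y))) := by
          rw [← mul_assoc, ENNReal.inv_mul_cancel hl0 hltop, one_mul]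
      _ ≤ l⁻¹ * ν (ball (y : X) (q y)) := mul_le_mul' le_rfl h1
  have hsub2r : ∀ y : E, ball (y : X) (q y) ⊆ ball x (2 * r) := by
    intro y z hz
    have hy := y.2.1
    rw [mem_ball] at hz hy ⊢
    have h3 := dist_triangle z (y : X) x
    have h4 := hqr y
    linarith
  obtain ⟨u, -, hdisj, hcov⟩ :=
    Vitali.exists_disjoint_subfamily_covering_enlargement_closedBall
      (univ : Set E) (fun y => (y : X)) (fun y => (q y : ℝ)) r (fun a _ => hqr a) 5
      (by norm_num)
  have hdisj' : u.PairwiseDisjoint fun b : E => ball (b : X) (q b) := by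
    intro a ha b hb hab
    exact (hdisj ha hb hab).mono ball_subset_closedBall ball_subset_closedBall
  have hucnt : u.Countable := by
    have hdisj'' : Pairwise (Function.onFun Disjoint fun b : u => ball ((b : E) : X) (q (b : E))) := by
      intro a b hab
      exact hdisj' a.2 b.2 (fun h => hab (Subtype.ext h))
    have hfin2 : μ (⋃ b : u, ball ((b : E) : X) (q (b : E))) ≠ ∞ := by
      refine ne_of_lt (lt_of_le_of_lt (measure_mono ?_) (hfin x (2 * r) (by linarith)))
      exact iUnion_subset fun b => hsub2r (b : E)
    have hcnt := MeasureTheory.Measure.countable_meas_pos_of_disjoint_of_meas_iUnion_ne_top μ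
      (fun b : u => measurableSet_ball) hdisj'' hfin2
    have heq : {b : u | 0 < μ (ball ((b : E) : X) (q (b : E)))} = Set.univ :=
      eq_univ_of_forall fun b => hpos _ _ (hq0 _)
    rw [heq] at hcnt
    haveI : Countable u := countable_univ_iff.mp hcnt
    exact Set.countable_coe_iff.mp this
  have hcov8 : E ⊆ ⋃ b ∈ u, ball ((b : E) : X) (8 * q b) := by
    intro y hy
    obtain ⟨b, hb, hsubb⟩ := hcov ⟨y, hy⟩ (mem_univ _)
    have hmem : y ∈ closedBall ((⟨y, hy⟩ : E) : X) (q ⟨y, hy⟩) :=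
      mem_closedBall_self (hq0 _).le
    have h5 := hsubb hmem
    refine mem_biUnion hb ?_
    rw [mem_closedBall] at h5
    rw [mem_ball]
    have h6 := hq0 b
    linarith
  calc μ E ≤ μ (⋃ b ∈ u, ball ((b : E) : X) (8 * q b)) := measure_mono hcov8
    _ ≤ ∑' b : u, μ (ball ((b : E) : X) (8 * q (b : E))) := measure_biUnion_le μ hucnt _
    _ ≤ ∑' b : u, ((ENNReal.ofReal Cμ) ^ 3 * l⁻¹) * ν (ball ((b : E) : X) (q (b : E))) := by
        refine ENNReal.tsum_le_tsum fun b => ?_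
        have hd := doubling_pow hdbl ((b : E) : X) (hq0 (b : E)) 3
        norm_num at hd
        refine hd.trans ?_
        rw [mul_assoc]
        exact mul_le_mul' le_rfl (key (b : E))
    _ = (ENNReal.ofReal Cμ) ^ 3 * l⁻¹ * ∑' b : u, ν (ball ((b : E) : X) (q (b : E))) :=
        ENNReal.tsum_mul_left
    _ ≤ (ENNReal.ofReal Cμ) ^ 3 * l⁻¹ * ν (ball x (2 * r)) := by
        refine mul_le_mul' le_rfl ?_
        rw [← measure_biUnion hucnt hdisj' (fun b _ => measurableSet_ball)]
        exact measure_mono (iUnion₂_subset fun b _ => hsub2r b)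

end Weak

lemma pow_rpow_comm (x : ℝ≥0∞) (n : ℕ) (d : ℝ) : (x ^ n) ^ d = (x ^ d) ^ n := by
  rw [← ENNReal.rpow_natCast x n, ← ENNReal.rpow_mul, ← ENNReal.rpow_natCast (x ^ d) n,
    ← ENNReal.rpow_mul, mul_comm]

lemma term_algebra {l0 : ℝ≥0∞} (hl0 : l0 ≠ 0) (hltop : l0 ≠ ∞) {δ : ℝ} (hδ0 : 0 ≤ δ)
    (hδ1 : δ ≤ 1) (k : ℕ) :
    (2 ^ (k + 1) * l0) ^ δ * ((2 ^ k * l0)⁻¹ * l0) ≤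
      2 * ((2 : ℝ≥0∞) ^ (δ - 1)) ^ k * l0 ^ δ := by
  have h2 : (2 : ℝ≥0∞) ≠ 0 := two_ne_zero
  have h2t : (2 : ℝ≥0∞) ≠ ∞ := ENNReal.ofNat_ne_top
  have e1 : (2 ^ (k + 1) * l0) ^ δ = ((2 : ℝ≥0∞) ^ δ) ^ (k + 1) * l0 ^ δ := by
    rw [ENNReal.mul_rpow_of_ne_top (pow_ne_top h2t) hltop, pow_rpow_comm]
  have e2 : ((2 : ℝ≥0∞) ^ k * l0)⁻¹ * l0 = ((2 : ℝ≥0∞)⁻¹) ^ k := by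
    rw [ENNReal.mul_inv (Or.inl (pow_ne_zero k h2)) (Or.inl (pow_ne_top h2t)),
      ENNReal.inv_pow, mul_assoc, ENNReal.inv_mul_cancel hl0 hltop, mul_one]
  have e3 : (2 : ℝ≥0∞) ^ δ * 2⁻¹ = (2 : ℝ≥0∞) ^ (δ - 1) := by
    rw [ENNReal.rpow_sub δ 1 h2 h2t, ENNReal.rpow_one, ENNReal.div_eq_inv_mul, mul_comm]
  have e4 : ((2 : ℝ≥0∞) ^ δ) ^ (k + 1) * ((2 : ℝ≥0∞)⁻¹) ^ k =
      (2 : ℝ≥0∞) ^ δ * ((2 : ℝ≥0∞) ^ (δ - 1)) ^ k := by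
    rw [pow_succ', mul_assoc, ← mul_pow, e3]
  have e5 : (2 : ℝ≥0∞) ^ δ ≤ 2 := by
    have := ENNReal.rpow_le_rpow_of_exponent_le (x := 2) one_le_two hδ1
    rwa [ENNReal.rpow_one] at this
  calc (2 ^ (k + 1) * l0) ^ δ * ((2 ^ k * l0)⁻¹ * l0)
      = ((2 : ℝ≥0∞) ^ δ) ^ (k + 1) * ((2 : ℝ≥0∞)⁻¹) ^ k * l0 ^ δ := by rw [e1, e2]; ring
    _ = (2 : ℝ≥0∞) ^ δ * ((2 : ℝ≥0∞) ^ (δ - 1)) ^ k * l0 ^ δ := by rw [e4]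
    _ ≤ 2 * ((2 : ℝ≥0∞) ^ (δ - 1)) ^ k * l0 ^ δ :=
        mul_le_mul' (mul_le_mul' e5 le_rfl) le_rfl

section Kolmogorov

variable {μ ν : Measure X} {Cμ : ℝ}

lemma lintegral_maxFnLoc_rpow (hCμ : 1 ≤ Cμ)
    (hdbl : ∀ (x : X) (r : ℝ), 0 < r →
      μ (ball x (2 * r)) ≤ ENNReal.ofReal Cμ * μ (ball x r))
    (hpos : ∀ (x : X) (r : ℝ), 0 < r → 0 < μ (ball x r))
    (hfin : ∀ (x : X) (r : ℝ), 0 < r → μ (ball x r) < ⊤)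
    (hae : ∀ᵐ y ∂μ, maxFn μ ν y < ⊤)
    (x : X) {r : ℝ} (hr : 0 < r) {δ : ℝ} (hδ0 : 0 < δ) (hδ1 : δ < 1)
    (hl0 : maxFn μ ν x ≠ 0) (hltop : maxFn μ ν x ≠ ∞) :
    ∫⁻ y in ball x r, (maxFnLoc μ ν r y) ^ δ ∂μ ≤
      (1 + (ENNReal.ofReal Cμ) ^ 4 * 2 * (1 - (2 : ℝ≥0∞) ^ (δ - 1))⁻¹) *
        ((maxFn μ ν x) ^ δ * μ (ball x r)) := by
  set l0 := maxFn μ ν x with hl0def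
  set S : ℕ → Set X := fun k => {y | y ∈ ball x r ∧ 2 ^ k * l0 < maxFnLoc μ ν r y} with hS
  have hSm : ∀ k, MeasurableSet (S k) := fun k =>
    measurableSet_ball.inter (measurable_maxFnLoc μ ν hr measurableSet_Ioi)
  have hlk0 : ∀ k : ℕ, (2 : ℝ≥0∞) ^ k * l0 ≠ 0 := fun k =>
    mul_ne_zero (pow_ne_zero k two_ne_zero) hl0
  have hlkt : ∀ k : ℕ, (2 : ℝ≥0∞) ^ k * l0 ≠ ∞ := fun k =>
    ENNReal.mul_ne_top (pow_ne_top ENNReal.ofNat_ne_top) hltop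
  -- the majorant
  set G : X → ℝ≥0∞ := fun y =>
    l0 ^ δ + ∑' k : ℕ, ((2 ^ (k + 1) * l0) ^ δ) * (S k).indicator (fun _ => 1) y with hG
  have hGmeas : Measurable G := by
    apply Measurable.add measurable_const
    apply Measurable.ennreal_tsum
    intro k
    exact (measurable_one.indicator (hSm k)).const_mul _
  -- pointwise bound a.e.
  have hpt : ∀ᵐ y ∂μ, y ∈ ball x r →
      (maxFnLoc μ ν r y) ^ δ ≤ G y := by
    filter_upwards [hae] with y hy hyB
    set m := maxFnLoc μ ν r y with hm
    have hmfin : m ≠ ∞ := ((maxFnLoc_le_maxFn μ ν r y).trans_lt hy).ne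
    rcases le_or_gt m l0 with h | h
    · exact le_trans (ENNReal.rpow_le_rpow h hδ0.le) le_self_add
    · -- find the dyadic level
      have hPex : ∃ n : ℕ, m ≤ 2 ^ n * l0 := by
        have h1 : m * l0⁻¹ ≠ ∞ :=
          ENNReal.mul_ne_top hmfin (ENNReal.inv_ne_top.2 hl0)
        obtain ⟨n, hn⟩ := ENNReal.exists_nat_gt h1
        refine ⟨n, ?_⟩
        have h2 : ((n : ℕ) : ℝ≥0∞) ≤ 2 ^ n := by
          have := (n.lt_two_pow_self).le
          exact_mod_cast this
        calc m = m * l0⁻¹ * l0 := by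
              rw [mul_assoc, ENNReal.inv_mul_cancel hl0 hltop, mul_one]
          _ ≤ (n : ℝ≥0∞) * l0 := mul_le_mul' hn.le le_rfl
          _ ≤ 2 ^ n * l0 := mul_le_mul' h2 le_rfl
      classical
      set k0 := Nat.find hPex with hk0
      have hk0P : m ≤ 2 ^ k0 * l0 := Nat.find_spec hPex
      have hk0ne : k0 ≠ 0 := by
        intro h0
        rw [h0] at hk0P
        simp only [pow_zero, one_mul] at hk0P
        exact absurd hk0P h.not_ge
      obtain ⟨k, hk⟩ : ∃ k, k0 = k + 1 := ⟨k0 - 1, (Nat.succ_pred_eq_of_pos (Nat.pos_of_ne_zero hk0ne)).symm⟩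
      have hkP : ¬ (m ≤ 2 ^ k * l0) := Nat.find_min hPex (by omega)
      push_neg at hkP
      have hyS : y ∈ S k := ⟨hyB, hkP⟩
      have hterm : m ^ δ ≤ (2 ^ (k + 1) * l0) ^ δ * (S k).indicator (fun _ => 1) y := by
        rw [Set.indicator_of_mem hyS, mul_one]
        refine ENNReal.rpow_le_rpow ?_ hδ0.le
        rw [← hk]; exact hk0P
      refine hterm.trans (le_add_left (ENNReal.le_tsum k))
  have hint1 : ∫⁻ y in ball x r, (maxFnLoc μ ν r y) ^ δ ∂μ ≤ ∫⁻ y in ball x r, G y ∂μ :=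
    setLIntegral_mono_ae hGmeas.aemeasurable hpt
  -- compute the integral of the majorant
  have hSsub : ∀ k, S k ⊆ ball x r := fun k y hy => hy.1
  have hint2 : ∫⁻ y in ball x r, G y ∂μ =
      l0 ^ δ * μ (ball x r) + ∑' k : ℕ, (2 ^ (k + 1) * l0) ^ δ * μ (S k) := by
    have hswap : ∫⁻ a in ball x r,
        (∑' k : ℕ, (2 ^ (k + 1) * l0) ^ δ * (S k).indicator (fun _ => 1) a) ∂μ =
        ∑' k : ℕ, ∫⁻ a in ball x r,
          (2 ^ (k + 1) * l0) ^ δ * (S k).indicator (fun _ => 1) a ∂μ :=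
      lintegral_tsum (fun k => ((measurable_one.indicator (hSm k)).const_mul _).aemeasurable)
    rw [hG, lintegral_add_left measurable_const, setLIntegral_const, hswap]
    congr 1
    refine tsum_congr fun k => ?_
    rw [lintegral_const_mul' _ _ (ENNReal.rpow_ne_top_of_nonneg hδ0.le (hlkt (k + 1)))]
    congr 1
    rw [lintegral_indicator (hSm k), setLIntegral_one, Measure.restrict_apply (hSm k),
      inter_eq_left.mpr (hSsub k)]
  -- bound each level set via the weak-type estimate
  have hν2r : ν (ball x (2 * r)) ≤ ENNReal.ofReal Cμ * μ (ball x r) * l0 := by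
    calc ν (ball x (2 * r)) ≤ μ (ball x (2 * r)) * maxFn μ ν x :=
          measure_le_mul_maxFn hpos hfin x (by linarith)
      _ ≤ ENNReal.ofReal Cμ * μ (ball x r) * l0 :=
          mul_le_mul' (hdbl x r hr) le_rfl
  have hSk : ∀ k : ℕ, μ (S k) ≤
      (ENNReal.ofReal Cμ) ^ 4 * ((2 ^ k * l0)⁻¹ * l0) * μ (ball x r) := by
    intro k
    calc μ (S k) ≤ (ENNReal.ofReal Cμ) ^ 3 * (2 ^ k * l0)⁻¹ * ν (ball x (2 * r)) :=
          weak_type hCμ hdbl hpos hfin x hr (hlk0 k) (hlkt k)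
      _ ≤ (ENNReal.ofReal Cμ) ^ 3 * (2 ^ k * l0)⁻¹ *
            (ENNReal.ofReal Cμ * μ (ball x r) * l0) := mul_le_mul' le_rfl hν2r
      _ = (ENNReal.ofReal Cμ) ^ 4 * ((2 ^ k * l0)⁻¹ * l0) * μ (ball x r) := by ring
  have hsum : ∑' k : ℕ, (2 ^ (k + 1) * l0) ^ δ * μ (S k) ≤
      (ENNReal.ofReal Cμ) ^ 4 * 2 * (1 - (2 : ℝ≥0∞) ^ (δ - 1))⁻¹ *
        (l0 ^ δ * μ (ball x r)) := by
    have hterm : ∀ k : ℕ, (2 ^ (k + 1) * l0) ^ δ * μ (S k) ≤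
        ((ENNReal.ofReal Cμ) ^ 4 * 2 * (l0 ^ δ * μ (ball x r))) *
          ((2 : ℝ≥0∞) ^ (δ - 1)) ^ k := by
      intro k
      calc (2 ^ (k + 1) * l0) ^ δ * μ (S k)
          ≤ (2 ^ (k + 1) * l0) ^ δ *
              ((ENNReal.ofReal Cμ) ^ 4 * ((2 ^ k * l0)⁻¹ * l0) * μ (ball x r)) :=
            mul_le_mul' le_rfl (hSk k)
        _ = (ENNReal.ofReal Cμ) ^ 4 * ((2 ^ (k + 1) * l0) ^ δ * ((2 ^ k * l0)⁻¹ * l0)) *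
              μ (ball x r) := by ring
        _ ≤ (ENNReal.ofReal Cμ) ^ 4 * (2 * ((2 : ℝ≥0∞) ^ (δ - 1)) ^ k * l0 ^ δ) *
              μ (ball x r) :=
            mul_le_mul' (mul_le_mul' le_rfl (term_algebra hl0 hltop hδ0.le hδ1.le k)) le_rfl
        _ = ((ENNReal.ofReal Cμ) ^ 4 * 2 * (l0 ^ δ * μ (ball x r))) *
              ((2 : ℝ≥0∞) ^ (δ - 1)) ^ k := by ring
    calc ∑' k : ℕ, (2 ^ (k + 1) * l0) ^ δ * μ (S k)
        ≤ ∑' k : ℕ, ((ENNReal.ofReal Cμ) ^ 4 * 2 * (l0 ^ δ * μ (ball x r))) *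
            ((2 : ℝ≥0∞) ^ (δ - 1)) ^ k := ENNReal.tsum_le_tsum hterm
      _ = ((ENNReal.ofReal Cμ) ^ 4 * 2 * (l0 ^ δ * μ (ball x r))) *
            (1 - (2 : ℝ≥0∞) ^ (δ - 1))⁻¹ := by
          rw [ENNReal.tsum_mul_left, ENNReal.tsum_geometric]
      _ = (ENNReal.ofReal Cμ) ^ 4 * 2 * (1 - (2 : ℝ≥0∞) ^ (δ - 1))⁻¹ *
            (l0 ^ δ * μ (ball x r)) := by ring
  calc ∫⁻ y in ball x r, (maxFnLoc μ ν r y) ^ δ ∂μ ≤ ∫⁻ y in ball x r, G y ∂μ := hint1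
    _ = l0 ^ δ * μ (ball x r) + ∑' k : ℕ, (2 ^ (k + 1) * l0) ^ δ * μ (S k) := hint2
    _ ≤ l0 ^ δ * μ (ball x r) + (ENNReal.ofReal Cμ) ^ 4 * 2 *
          (1 - (2 : ℝ≥0∞) ^ (δ - 1))⁻¹ * (l0 ^ δ * μ (ball x r)) :=
        add_le_add le_rfl hsum
    _ = (1 + (ENNReal.ofReal Cμ) ^ 4 * 2 * (1 - (2 : ℝ≥0∞) ^ (δ - 1))⁻¹) *
          (l0 ^ δ * μ (ball x r)) := by ring

end Kolmogorov

section Separable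

variable {μ : Measure X}

lemma separableSpace_of_measure
    (hpos : ∀ (x : X) (r : ℝ), 0 < r → 0 < μ (ball x r))
    (hfin : ∀ (x : X) (r : ℝ), 0 < r → μ (ball x r) < ⊤) :
    TopologicalSpace.SeparableSpace X := by
  rcases isEmpty_or_nonempty X with h | h
  · infer_instance
  obtain ⟨x₀⟩ := h
  have key : ∀ n m : ℕ, ∃ S : Set X, S.Countable ∧
      ∀ y ∈ ball x₀ (m + 1), ∃ s ∈ S, dist y s < 1 / (n + 1 : ℝ) := by
    intro n m
    have hn : (0 : ℝ) < 1 / (n + 1 : ℝ) := by positivity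
    set P : Set (Set X) := {S | S ⊆ ball x₀ (m + 1) ∧
      ∀ a ∈ S, ∀ b ∈ S, a ≠ b → 1 / (n + 1 : ℝ) ≤ dist a b} with hP
    obtain ⟨S, hSP, hSmax⟩ : ∃ S, Maximal (· ∈ P) S := by
      apply zorn_subset
      intro c hcP hchain
      refine ⟨⋃₀ c, ⟨?_, ?_⟩, fun s hs => subset_sUnion_of_mem hs⟩
      · exact sUnion_subset fun s hs => (hcP hs).1
      · rintro a ⟨s, hs, has⟩ b ⟨t, ht, hbt⟩ hab
        rcases hchain.total hs ht with hst | hts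
        · exact (hcP ht).2 a (hst has) b hbt hab
        · exact (hcP hs).2 a has b (hts hbt) hab
    refine ⟨S, ?_, ?_⟩
    · -- countability via disjoint balls of positive measure
      have hdisj : Pairwise (Function.onFun Disjoint fun s : S => ball (s : X) (1 / (2 * (n + 1)))) := by
        intro a b hab
        refine Set.disjoint_left.2 fun z hza hzb => ?_
        rw [mem_ball] at hza hzb
        have h1 : (a : X) ≠ (b : X) := fun h => hab (Subtype.ext h)
        have h2 := hSP.2 (a : X) a.2 (b : X) b.2 h1
        have h3 : dist (a : X) (b : X) ≤ dist z (a : X) + dist z (b : X) :=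
          dist_triangle_left _ _ _
        have h9 : 1 / (2 * (n + 1) : ℝ) + 1 / (2 * (n + 1) : ℝ) = 1 / (n + 1 : ℝ) := by
          rw [← add_div]
          rw [show (1:ℝ) + 1 = 2 by norm_num]
          rw [mul_comm, div_eq_div_iff (by positivity) (by positivity)]
          ring
        linarith
      have hsub : (⋃ s : S, ball (s : X) (1 / (2 * (n + 1)))) ⊆ ball x₀ (m + 2) := by
        rintro z ⟨_, ⟨s, rfl⟩, hz⟩
        rw [mem_ball] at hz ⊢
        have h4 : dist (s : X) x₀ < m + 1 := hSP.1 s.2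
        have h5 := dist_triangle z (s : X) x₀
        have h6 : 1 / (2 * (n + 1) : ℝ) ≤ 1 := by
          rw [div_le_one (by positivity)]
          have : (0:ℝ) ≤ (n:ℝ) := Nat.cast_nonneg n
          linarith
        linarith
      have hucnt := MeasureTheory.Measure.countable_meas_pos_of_disjoint_of_meas_iUnion_ne_top μ
        (fun s : S => measurableSet_ball) hdisj
        (ne_of_lt (lt_of_le_of_lt (measure_mono hsub) (hfin x₀ (m + 2) (by positivity))))
      have heq : {s : S | 0 < μ (ball (s : X) (1 / (2 * (n + 1))))} = Set.univ :=
        eq_univ_of_forall fun s => hpos _ _ (by positivity)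
      rw [heq] at hucnt
      haveI : Countable S := countable_univ_iff.mp hucnt
      exact Set.countable_coe_iff.mp this
    · -- maximality gives the net property
      intro y hy
      by_cases hyS : y ∈ S
      · exact ⟨y, hyS, by simpa using hn⟩
      by_contra hcon
      push_neg at hcon
      have hPins : insert y S ∈ P := by
        constructor
        · exact insert_subset hy hSP.1
        · intro a ha b hb hab
          rcases ha with rfl | ha
          · rcases hb with rfl | hb
            · exact absurd rfl hab
            · exact hcon b hb
          · rcases hb with rfl | hb
            · rw [dist_comm]; exact hcon a ha
            · exact hSP.2 a ha b hb hab
      have hss := hSmax hPins (subset_insert y S)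
      exact hyS (hss (mem_insert y S))
  choose S hScnt hSnet using key
  refine ⟨⟨⋃ n, ⋃ m, S n m, countable_iUnion fun n => countable_iUnion fun m => hScnt n m, ?_⟩⟩
  rw [Metric.dense_iff]
  intro y r hr
  obtain ⟨m, hm⟩ := exists_nat_gt (dist y x₀)
  obtain ⟨n, hn⟩ := exists_nat_gt (1 / r)
  have hyb : y ∈ ball x₀ (m + 1) := by
    rw [mem_ball]; push_cast; linarith
  obtain ⟨s, hs, hds⟩ := hSnet n m y hyb
  refine ⟨s, ?_, ?_⟩
  · rw [mem_ball, dist_comm]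
    refine lt_of_lt_of_le hds ?_
    rw [div_le_iff₀ (by positivity)]
    have h7 : 1 / r < n + 1 := by
      have : (0:ℝ) ≤ (n:ℝ) := Nat.cast_nonneg n
      linarith
    rw [div_lt_iff₀ hr] at h7
    nlinarith
  · exact mem_iUnion.2 ⟨n, mem_iUnion.2 ⟨m, hs⟩⟩

end Separable

section Main

variable {μ ν : Measure X} {Cμ : ℝ}

/-- abbreviation for the final constant -/
noncomputable def Kconst (Cμ δ : ℝ) : ℝ≥0∞ :=
  1 + ((ENNReal.ofReal Cμ) ^ 2) ^ δ +
    (ENNReal.ofReal Cμ) ^ 4 * 2 * (1 - (2 : ℝ≥0∞) ^ (δ - 1))⁻¹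

lemma Kconst_ne_top {δ : ℝ} (hδ0 : 0 ≤ δ) (hδ1 : δ < 1) : Kconst Cμ δ ≠ ∞ := by
  have hq : (2 : ℝ≥0∞) ^ (δ - 1) < 1 :=
    ENNReal.rpow_lt_one_of_one_lt_of_neg one_lt_two (by linarith)
  have h1 : (1 - (2 : ℝ≥0∞) ^ (δ - 1))⁻¹ ≠ ∞ := by
    rw [ENNReal.inv_ne_top]
    exact (tsub_pos_of_lt hq).ne'
  refine ENNReal.add_ne_top.2 ⟨ENNReal.add_ne_top.2 ⟨ENNReal.one_ne_top, ?_⟩, ?_⟩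
  · exact ENNReal.rpow_ne_top_of_nonneg hδ0 (pow_oC_ne_top 2)
  · exact ENNReal.mul_ne_top (ENNReal.mul_ne_top (pow_oC_ne_top 4) ENNReal.ofNat_ne_top) h1

lemma main_bound (hCμ : 1 ≤ Cμ)
    (hdbl : ∀ (x : X) (r : ℝ), 0 < r →
      μ (ball x (2 * r)) ≤ ENNReal.ofReal Cμ * μ (ball x r))
    (hpos : ∀ (x : X) (r : ℝ), 0 < r → 0 < μ (ball x r))
    (hfin : ∀ (x : X) (r : ℝ), 0 < r → μ (ball x r) < ⊤)
    (hae : ∀ᵐ y ∂μ, maxFn μ ν y < ⊤)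
    {δ : ℝ} (hδ0 : 0 < δ) (hδ1 : δ < 1)
    (x : X) (hx0 : maxFn μ ν x ≠ 0) (hxt : maxFn μ ν x ≠ ∞) :
    centeredMaxFnE μ (fun y => (maxFn μ ν y) ^ δ) x ≤ Kconst Cμ δ * (maxFn μ ν x) ^ δ := by
  set l0 := maxFn μ ν x with hl0def
  rw [centeredMaxFnE]
  refine iSup₂_le fun r hr => ?_
  have hμB0 := (hpos x r hr).ne'
  have hμBt := (hfin x r hr).ne
  -- pointwise estimate on the ball
  have hpt : ∀ᵐ y ∂μ, y ∈ ball x r → (maxFn μ ν y) ^ δ ≤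
      (maxFnLoc μ ν r y) ^ δ + ((ENNReal.ofReal Cμ) ^ 2) ^ δ * l0 ^ δ := by
    refine Filter.Eventually.of_forall fun y hy => ?_
    have h1 := maxFn_le_on_ball (ν := ν) hCμ hdbl hr hy
    have h2 : (maxFn μ ν y) ^ δ ≤
        (maxFnLoc μ ν r y ⊔ ((ENNReal.ofReal Cμ) ^ 2 * l0)) ^ δ :=
      ENNReal.rpow_le_rpow h1 hδ0.le
    refine h2.trans ?_
    rcases le_total (maxFnLoc μ ν r y) ((ENNReal.ofReal Cμ) ^ 2 * l0) with h | h
    · rw [sup_eq_right.mpr h, ENNReal.mul_rpow_of_ne_top (pow_oC_ne_top 2) hxt]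
      exact le_add_self
    · rw [sup_eq_left.mpr h]
      exact le_self_add
  have hmeas : AEMeasurable (fun y =>
      (maxFnLoc μ ν r y) ^ δ + ((ENNReal.ofReal Cμ) ^ 2) ^ δ * l0 ^ δ)
      (μ.restrict (ball x r)) := by
    refine Measurable.aemeasurable ?_
    exact (ENNReal.continuous_rpow_const.measurable.comp
      (measurable_maxFnLoc μ ν hr)).add measurable_const
  have hint1 : ∫⁻ y in ball x r, (maxFn μ ν y) ^ δ ∂μ ≤
      ∫⁻ y in ball x r,
        ((maxFnLoc μ ν r y) ^ δ + ((ENNReal.ofReal Cμ) ^ 2) ^ δ * l0 ^ δ) ∂μ :=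
    setLIntegral_mono_ae hmeas hpt
  have hint2 : ∫⁻ y in ball x r,
      ((maxFnLoc μ ν r y) ^ δ + ((ENNReal.ofReal Cμ) ^ 2) ^ δ * l0 ^ δ) ∂μ =
      ∫⁻ y in ball x r, (maxFnLoc μ ν r y) ^ δ ∂μ +
        ((ENNReal.ofReal Cμ) ^ 2) ^ δ * l0 ^ δ * μ (ball x r) := by
    rw [lintegral_add_right _ measurable_const, setLIntegral_const]
  have hkol := lintegral_maxFnLoc_rpow (ν := ν) hCμ hdbl hpos hfin hae x hr hδ0 hδ1 hx0 hxt
  have htot : ∫⁻ y in ball x r, (maxFn μ ν y) ^ δ ∂μ ≤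
      (Kconst Cμ δ * l0 ^ δ) * μ (ball x r) := by
    have hre : (1 + (ENNReal.ofReal Cμ) ^ 4 * 2 * (1 - (2 : ℝ≥0∞) ^ (δ - 1))⁻¹) *
          ((maxFn μ ν x) ^ δ * μ (ball x r)) +
        ((ENNReal.ofReal Cμ) ^ 2) ^ δ * l0 ^ δ * μ (ball x r) =
        (Kconst Cμ δ * l0 ^ δ) * μ (ball x r) := by
      rw [Kconst, ← hl0def]; ring
    calc ∫⁻ y in ball x r, (maxFn μ ν y) ^ δ ∂μ
        ≤ ∫⁻ y in ball x r, (maxFnLoc μ ν r y) ^ δ ∂μ +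
            ((ENNReal.ofReal Cμ) ^ 2) ^ δ * l0 ^ δ * μ (ball x r) := by
          rw [← hint2]; exact hint1
      _ ≤ (1 + (ENNReal.ofReal Cμ) ^ 4 * 2 * (1 - (2 : ℝ≥0∞) ^ (δ - 1))⁻¹) *
            ((maxFn μ ν x) ^ δ * μ (ball x r)) +
          ((ENNReal.ofReal Cμ) ^ 2) ^ δ * l0 ^ δ * μ (ball x r) :=
          add_le_add hkol le_rfl
      _ = (Kconst Cμ δ * l0 ^ δ) * μ (ball x r) := hre
  calc (μ (ball x r))⁻¹ * ∫⁻ y in ball x r, (maxFn μ ν y) ^ δ ∂μ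
      ≤ (μ (ball x r))⁻¹ * ((Kconst Cμ δ * l0 ^ δ) * μ (ball x r)) :=
        mul_le_mul' le_rfl htot
    _ = Kconst Cμ δ * l0 ^ δ := by
        rw [mul_comm (Kconst Cμ δ * l0 ^ δ) (μ (ball x r)), ← mul_assoc,
          ENNReal.inv_mul_cancel hμB0 hμBt, one_mul]

end Main

end CR


/-- **Coifman--Rochberg on spaces of homogeneous type.** If `f` is locally integrable with
`Mf(x) < ∞` for `μ`-a.e. `x`, and `0 ≤ δ < 1`, then `(Mf)^δ ∈ A_1(X)`: there is a constant
`C` (depending only on `δ` and the doubling constant) such that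
`M((Mf)^δ)(x) ≤ C (Mf(x))^δ` for `μ`-a.e. `x`. -/
theorem coifman_rochberg
    {X : Type*} [MetricSpace X] [MeasurableSpace X] [BorelSpace X]
    (μ : Measure X) (Cμ : ℝ) (hCμ : 1 ≤ Cμ)
    (hdbl : ∀ (x : X) (r : ℝ), 0 < r →
      μ (ball x (2 * r)) ≤ ENNReal.ofReal Cμ * μ (ball x r))
    (hpos : ∀ (x : X) (r : ℝ), 0 < r → 0 < μ (ball x r))
    (hfin : ∀ (x : X) (r : ℝ), 0 < r → μ (ball x r) < ⊤)
    (f : X → ℝ) (hfloc : LocallyIntegrable f μ)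
    (hMf : ∀ᵐ x ∂μ, centeredMaxFn μ f x < ⊤)
    (δ : ℝ) (hδ0 : 0 ≤ δ) (hδ1 : δ < 1) :
    ∃ C : ℝ, 0 < C ∧
      ∀ᵐ x ∂μ,
        centeredMaxFnE μ (fun y => (centeredMaxFn μ f y) ^ δ) x ≤
          ENNReal.ofReal C * (centeredMaxFn μ f x) ^ δ := by
  haveI : TopologicalSpace.SeparableSpace X :=
    CR.separableSpace_of_measure hpos hfin
  haveI : SecondCountableTopology X := UniformSpace.secondCountable_of_separable X
  -- replace `f` by a measurable representative
  obtain ⟨f', hf'meas, hff'⟩ : ∃ f' : X → ℝ, Measurable f' ∧ f =ᵐ[μ] f' := by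
    have h := hfloc.aestronglyMeasurable
    exact ⟨h.mk f, h.stronglyMeasurable_mk.measurable, h.ae_eq_mk⟩
  set g : X → ℝ≥0∞ := fun y => ENNReal.ofReal |f' y| with hg
  have hgmeas : Measurable g := hf'meas.abs.ennreal_ofReal
  set ν := μ.withDensity g with hν
  have hball : ∀ (z : X) (s : ℝ),
      (∫⁻ y in ball z s, ENNReal.ofReal |f y| ∂μ) = ν (ball z s) := by
    intro z s
    rw [hν, withDensity_apply _ measurableSet_ball]
    refine lintegral_congr_ae (ae_restrict_of_ae (hff'.mono fun y hy => ?_))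
    rw [hg]; simp [hy]
  have hMeq : ∀ z, centeredMaxFn μ f z = CR.maxFn μ ν z := by
    intro z
    rw [centeredMaxFn, centeredMaxFnE, CR.maxFn]
    refine iSup_congr fun s => iSup_congr fun hs => ?_
    rw [CR.avg, hball]
  rcases eq_or_lt_of_le hδ0 with heq | hδpos
  · -- `δ = 0`
    subst heq
    refine ⟨1, one_pos, Filter.Eventually.of_forall fun x => ?_⟩
    simp only [ENNReal.rpow_zero]
    rw [centeredMaxFnE]
    refine iSup₂_le fun r hr => ?_
    rw [setLIntegral_one, ENNReal.inv_mul_cancel (hpos x r hr).ne' (hfin x r hr).ne]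
    simp
  · -- `0 < δ`
    set K := CR.Kconst Cμ δ with hK
    have hKt : K ≠ ∞ := CR.Kconst_ne_top hδ0 hδ1
    have hKtr : (0:ℝ) ≤ K.toReal := ENNReal.toReal_nonneg
    refine ⟨K.toReal + 1, by linarith, ?_⟩
    have hKle : K ≤ ENNReal.ofReal (K.toReal + 1) := by
      calc K = ENNReal.ofReal K.toReal := (ENNReal.ofReal_toReal hKt).symm
        _ ≤ _ := ENNReal.ofReal_le_ofReal (by linarith)
    have hae : ∀ᵐ y ∂μ, CR.maxFn μ ν y < ⊤ := by
      filter_upwards [hMf] with y hy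
      rwa [hMeq y] at hy
    filter_upwards [hae] with x hx
    have hfun : (fun y => (centeredMaxFn μ f y) ^ δ) = fun y => (CR.maxFn μ ν y) ^ δ := by
      funext y; rw [hMeq y]
    rw [hfun, hMeq x]
    by_cases hx0 : CR.maxFn μ ν x = 0
    · -- the measure ν vanishes, everything is zero
      have hνz : ∀ s : ℝ, ν (ball x s) = 0 := by
        intro s
        rcases le_or_gt s 0 with hs | hs
        · rw [ball_eq_empty.2 hs, measure_empty]
        · have h1 : CR.avg μ ν s x ≤ CR.maxFn μ ν x :=
            le_iSup₂ (f := fun t (_ : 0 < t) => CR.avg μ ν t x) s hs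
          rw [hx0, nonpos_iff_eq_zero, CR.avg] at h1
          rcases mul_eq_zero.1 h1 with h | h
          · exact absurd (ENNReal.inv_eq_zero.1 h) (hfin x s hs).ne
          · exact h
      have hνuniv : ν Set.univ = 0 := by
        have hcov : (Set.univ : Set X) ⊆ ⋃ n : ℕ, ball x (n + 1) := by
          intro y _
          rcases exists_nat_gt (dist y x) with ⟨n, hn⟩
          exact Set.mem_iUnion.2 ⟨n, by rw [mem_ball]; push_cast; linarith⟩
        exact measure_mono_null hcov (measure_iUnion_null fun n => hνz _)
      have hmz : ∀ y, CR.maxFn μ ν y = 0 := by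
        intro y
        rw [CR.maxFn]
        refine le_antisymm (iSup₂_le fun s hs => ?_) zero_le
        rw [CR.avg, measure_mono_null (Set.subset_univ _) hνuniv, mul_zero]
      have hzero : (fun y => (CR.maxFn μ ν y) ^ δ) = fun _ => (0 : ℝ≥0∞) := by
        funext y; rw [hmz y, ENNReal.zero_rpow_of_pos hδpos]
      rw [hzero, centeredMaxFnE]
      refine le_trans (iSup₂_le fun r hr => ?_) zero_le
      rw [lintegral_zero, mul_zero]
    · exact le_trans (CR.main_bound hCμ hdbl hpos hfin hae hδpos hδ1 x hx0 hx.ne)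
        (mul_le_mul' hKle le_rfl)
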